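/- arXiv:2108.13289 — 2 statements merged into one kernel-verified Lean document; each statement's English description precedes it below -/
import Mathlib

section
/- With $\mathrm{Vol}(C_\alpha(n)) = \frac{2\pi^{p/2}}{p\Gamma(p/2)}(\chi^2_{1-\alpha,p}/n)^{p/2}|\widehat\Omega|^{1/2}$, $\widehat\Sigma$ positive definite, and $\widehat{\mathrm{M\text{-}ESS}} = n|\widehat\Sigma|^{1/p}/|\widehat\Omega|^{1/p}$, the inequality $\mathrm{Vol}(C_\alpha(n))^{1/p} \leq \epsilon|\widehat\Sigma|^{1/2p}$ holds if and only if $\widehat{\mathrm{M\text{-}ESS}} \geq \frac{2^{2/p}\pi}{(p\Gamma(p/2))^{2/p}}\cdot\frac{\chi^2_{1-\alpha,p}}{\epsilon^2}$. -/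
open scoped BigOperators

/-- Equivalence of the volume-based stopping criterion and the M-ESS threshold:
`Vol(C_α(n))^{1/p} ≤ ε |Σ̂|^{1/(2p)}` iff
`n |Σ̂|^{1/p}/|Ω̂|^{1/p} ≥ 2^{2/p} π / (p Γ(p/2))^{2/p} · χ²_{1−α,p}/ε²`. -/
theorem stopping_rule_ess_equivalence {p : ℕ} (hp : 1 ≤ p) {n : ℕ} (hn : 0 < n)
    (ε : ℝ) (hε : 0 < ε) (χ : ℝ) (hχ : 0 < χ)
    (Ωh Sg : Matrix (Fin p) (Fin p) ℝ) (hΩ : Ωh.PosDef) (hS : Sg.PosDef)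
    (Vol : ℝ)
    (hVol : Vol = 2 * Real.pi ^ ((p : ℝ) / 2) / (p * Real.Gamma ((p : ℝ) / 2)) *
      (χ / n) ^ ((p : ℝ) / 2) * Real.sqrt Ωh.det) :
    Vol ^ ((p : ℝ)⁻¹) ≤ ε * Sg.det ^ (1 / (2 * (p : ℝ))) ↔
      (2 : ℝ) ^ (2 / (p : ℝ)) * Real.pi / ((p * Real.Gamma ((p : ℝ) / 2)) ^ (2 / (p : ℝ)))
          * (χ / ε ^ 2)
        ≤ (n : ℝ) * Sg.det ^ ((p : ℝ)⁻¹) / Ωh.det ^ ((p : ℝ)⁻¹) := by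
  set P : ℝ := (p : ℝ) with hPdef
  have hP : (0:ℝ) < P := by
    rw [hPdef]
    exact_mod_cast lt_of_lt_of_le Nat.zero_lt_one hp
  have hG : 0 < Real.Gamma (P / 2) := Real.Gamma_pos_of_pos (by linarith)
  set G : ℝ := Real.Gamma (P / 2) with hGdef
  have hPG : 0 < P * G := mul_pos hP hG
  have hnR : (0:ℝ) < n := by exact_mod_cast hn
  have hO : 0 < Ωh.det := hΩ.det_pos
  have hSd : 0 < Sg.det := hS.det_pos
  have hpi : (0:ℝ) < Real.pi := Real.pi_pos
  have hVolpos : 0 < Vol := by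
    rw [hVol]
    have h1 : (0:ℝ) < Real.pi ^ (P / 2) := Real.rpow_pos_of_pos hpi _
    have h2 : (0:ℝ) < (χ / n) ^ (P / 2) := Real.rpow_pos_of_pos (by positivity) _
    positivity
  have hPne : P ≠ 0 := ne_of_gt hP
  -- key computation of Vol ^ (2/P)
  have key : Vol ^ ((2:ℝ) / P) =
      (2 / (P * G)) ^ ((2:ℝ) / P) * Real.pi * (χ / n) * Ωh.det ^ P⁻¹ := by
    have hVol' : Vol = (2 / (P * G)) * Real.pi ^ (P / 2) * (χ / n) ^ (P / 2) *
        Ωh.det ^ ((1:ℝ)/2) := by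
      rw [hVol, Real.rpow_def_of_pos hO, Real.sqrt_eq_rpow]
      rw [Real.rpow_def_of_pos hO]
      ring
    rw [hVol']
    rw [Real.mul_rpow (by positivity) (by positivity),
        Real.mul_rpow (by positivity) (by positivity),
        Real.mul_rpow (by positivity) (by positivity)]
    rw [← Real.rpow_mul hpi.le, ← Real.rpow_mul (by positivity : (0:ℝ) ≤ χ / n),
        ← Real.rpow_mul hO.le]
    have e1 : P / 2 * (2 / P) = 1 := by field_simp
    have e2 : (1:ℝ) / 2 * (2 / P) = P⁻¹ := by
      field_simp
    rw [e1, e2, Real.rpow_one, Real.rpow_one]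
  -- squared form of LHS inequality
  have sq_iff : (Vol ^ P⁻¹ ≤ ε * Sg.det ^ (1 / (2 * P))) ↔
      (Vol ^ ((2:ℝ) / P) ≤ ε ^ 2 * Sg.det ^ P⁻¹) := by
    rw [← Real.rpow_le_rpow_iff (x := Vol ^ P⁻¹) (by positivity) (by positivity)
        (by norm_num : (0:ℝ) < 2),
      ← Real.rpow_mul hVolpos.le, Real.mul_rpow hε.le (by positivity),
      ← Real.rpow_mul hSd.le]
    have e3 : P⁻¹ * 2 = 2 / P := by ring
    have e4 : 1 / (2 * P) * 2 = P⁻¹ := by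
      field_simp
    rw [e3, e4, Real.rpow_two]
  rw [sq_iff, key]
  rw [Real.div_rpow (by norm_num) hPG.le]
  set A : ℝ := (2:ℝ) ^ ((2:ℝ) / P) with hAdef
  set B : ℝ := (P * G) ^ ((2:ℝ) / P) with hBdef
  have hA : 0 < A := Real.rpow_pos_of_pos (by norm_num) _
  have hB : 0 < B := Real.rpow_pos_of_pos hPG _
  set oP : ℝ := Ωh.det ^ P⁻¹ with hoPdef
  set sP : ℝ := Sg.det ^ P⁻¹ with hsPdef
  have hoP : 0 < oP := Real.rpow_pos_of_pos hO _
  have hsP : 0 < sP := Real.rpow_pos_of_pos hSd _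
  have e5 : A / B * Real.pi = A * Real.pi / B := by ring
  rw [e5]
  set a : ℝ := A * Real.pi / B with hadef
  have ha : 0 < a := by positivity
  rw [show a * (χ / n) * oP = a * χ * oP / n from by ring, div_le_iff₀ hnR,
      show a * (χ / ε ^ 2) = a * χ / ε ^ 2 from by ring,
      div_le_div_iff₀ (by positivity) hoP,
      show ε ^ 2 * sP * n = n * sP * ε ^ 2 from by ring]
end

section
/- Suppose $T^*(\epsilon)$ is the stopping time of the relative-volume sequential stopping rule with $R_n \to R > 0$ a.s. and $\widehat\Omega_n \to \Omega \succ 0$ a.s. Then $\lim_{\epsilon\to 0}\epsilon\, T^*(\epsilon)^{1/2} = d_{\alpha,p}^{1/p}\,\frac{|\Omega|^{1/2p}}{R}$ almost surely, where $d_{\alpha,p} = \frac{2\pi^{p/2}}{p\Gamma(p/2)}(\chi^2_{1-\alpha,p})^{p/2}$. -/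
open MeasureTheory ProbabilityTheory Filter
open scoped Topology Matrix

private lemma sqrt_add_one_le' (x : ℝ) (hx : 0 ≤ x) :
    Real.sqrt (x + 1) ≤ Real.sqrt x + 1 := by
  have h1 : Real.sqrt x * Real.sqrt x = x := Real.mul_self_sqrt hx
  have h2 : Real.sqrt (x + 1) ≤ Real.sqrt ((Real.sqrt x + 1) ^ 2) := by
    apply Real.sqrt_le_sqrt
    nlinarith [Real.sqrt_nonneg x]
  rwa [Real.sqrt_sq (by positivity)] at h2

/-- Glynn–Whitt-type asymptotics for the relative-volume sequential stopping rule: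
`ε T*(ε)^{1/2} → d_{α,p}^{1/p} |Ω|^{1/(2p)} / R` almost surely as `ε → 0⁺`. -/
theorem stopping_time_asymptotics {p : ℕ} (hp : 1 ≤ p) (χ : ℝ) (hχ : 0 < χ)
    (d : ℝ)
    (hd : d = 2 * Real.pi ^ ((p : ℝ) / 2) / (p * Real.Gamma ((p : ℝ) / 2)) *
      χ ^ ((p : ℝ) / 2))
    {Ω : Type*} [MeasureSpace Ω] [IsProbabilityMeasure (ℙ : Measure Ω)]
    (Om : Matrix (Fin p) (Fin p) ℝ) (hOm : Om.PosDef)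
    (Omn : ℕ → Ω → Matrix (Fin p) (Fin p) ℝ)
    (hOmn : ∀ᵐ ω ∂ℙ, ∀ i j, Tendsto (fun n => Omn n ω i j) atTop (𝓝 (Om i j)))
    (R : ℕ → Ω → ℝ) (Rlim : ℝ) (hRlim : 0 < Rlim)
    (hR : ∀ᵐ ω ∂ℙ, Tendsto (fun n => R n ω) atTop (𝓝 Rlim))
    (nstar : ℕ) (hnstar : 0 < nstar)
    (s : ℝ → ℕ → Ω → ℝ)
    (hs : ∀ ε n ω, s ε n ω = ε * R n ω * (if n < nstar then 1 else 0) + ((n : ℝ))⁻¹)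
    (T : ℝ → Ω → ℕ)
    (hT : ∀ ε ω, T ε ω = sInf {n : ℕ | 0 < n ∧
      (d * (n : ℝ) ^ (-(p : ℝ) / 2) * Real.sqrt (Omn n ω).det) ^ ((p : ℝ)⁻¹) + s ε n ω
        ≤ ε * R n ω}) :
    ∀ᵐ ω ∂ℙ, Tendsto (fun ε => ε * Real.sqrt (T ε ω)) (𝓝[>] (0 : ℝ))
      (𝓝 (d ^ ((p : ℝ)⁻¹) * Om.det ^ (1 / (2 * (p : ℝ))) / Rlim)) := by
  have hp0 : (0 : ℝ) < p := by exact_mod_cast hp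
  have hd0 : 0 < d := by
    have h1 : 0 < Real.Gamma ((p : ℝ) / 2) := Real.Gamma_pos_of_pos (by linarith)
    have h2 : 0 < Real.pi ^ ((p : ℝ) / 2) := Real.rpow_pos_of_pos Real.pi_pos _
    have h3 : 0 < χ ^ ((p : ℝ) / 2) := Real.rpow_pos_of_pos hχ _
    rw [hd]; positivity
  have hdetOm : 0 < Om.det := hOm.det_pos
  filter_upwards [hOmn, hR] with ω hOmω hRω
  -- convergence of the determinant
  have hOmT : Tendsto (fun n => Omn n ω) atTop (𝓝 Om) := by
    exact tendsto_pi_nhds.2 fun i => tendsto_pi_nhds.2 fun j => hOmω i j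
  have hdet : Tendsto (fun n => (Omn n ω).det) atTop (𝓝 Om.det) :=
    ((Continuous.matrix_det continuous_id).tendsto Om).comp hOmT
  -- abbreviations
  set g : ℕ → ℝ := fun n =>
    (d * (n : ℝ) ^ (-(p : ℝ) / 2) * Real.sqrt (Omn n ω).det) ^ ((p : ℝ)⁻¹) + ((n : ℝ))⁻¹
    with hg_def
  set A : ℝ := d ^ ((p : ℝ)⁻¹) * Real.sqrt Om.det ^ ((p : ℝ)⁻¹) with hA_def
  have hA0 : 0 < A :=
    mul_pos (Real.rpow_pos_of_pos hd0 _)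
      (Real.rpow_pos_of_pos (Real.sqrt_pos.2 hdetOm) _)
  have hbase_nonneg : ∀ n : ℕ,
      0 ≤ (d * (n : ℝ) ^ (-(p : ℝ) / 2) * Real.sqrt (Omn n ω).det) ^ ((p : ℝ)⁻¹) := by
    intro n
    apply Real.rpow_nonneg
    have h1 : (0 : ℝ) ≤ (n : ℝ) ^ (-(p : ℝ) / 2) := Real.rpow_nonneg (Nat.cast_nonneg n) _
    positivity
  -- the rewriting of √n * g n
  have hW : ∀ n : ℕ, 1 ≤ n → Real.sqrt n * g n
      = d ^ ((p : ℝ)⁻¹) * Real.sqrt ((Omn n ω).det) ^ ((p : ℝ)⁻¹) + (Real.sqrt n)⁻¹ := by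
    intro n hn
    have hn0 : (0 : ℝ) < n := by exact_mod_cast hn
    have hsqpos : 0 < Real.sqrt n := Real.sqrt_pos.2 hn0
    have hb : (d * (n : ℝ) ^ (-(p : ℝ) / 2) * Real.sqrt (Omn n ω).det) ^ ((p : ℝ)⁻¹)
        = d ^ ((p : ℝ)⁻¹) * ((n : ℝ) ^ (-(p : ℝ) / 2)) ^ ((p : ℝ)⁻¹)
          * Real.sqrt ((Omn n ω).det) ^ ((p : ℝ)⁻¹) := by
      rw [Real.mul_rpow (by positivity) (Real.sqrt_nonneg _),
        Real.mul_rpow hd0.le (Real.rpow_nonneg (Nat.cast_nonneg n) _)]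
    have hnp : ((n : ℝ) ^ (-(p : ℝ) / 2)) ^ ((p : ℝ)⁻¹) = (n : ℝ) ^ (-(1 : ℝ) / 2) := by
      rw [← Real.rpow_mul hn0.le]
      congr 1
      field_simp
    have hsq : Real.sqrt n * (n : ℝ) ^ (-(1 : ℝ) / 2) = 1 := by
      rw [Real.sqrt_eq_rpow, ← Real.rpow_add hn0]
      norm_num
    have hsinv : Real.sqrt n * ((n : ℝ))⁻¹ = (Real.sqrt n)⁻¹ := by
      rw [show ((n : ℝ)) = Real.sqrt n * Real.sqrt n from (Real.mul_self_sqrt hn0.le).symm]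
      field_simp
      rw [Real.sqrt_sq hsqpos.le]
    simp only [hg_def]
    rw [mul_add, hsinv, hb, hnp]
    have : Real.sqrt n * (d ^ ((p : ℝ)⁻¹) * (n : ℝ) ^ (-(1 : ℝ) / 2)
        * Real.sqrt ((Omn n ω).det) ^ ((p : ℝ)⁻¹))
        = d ^ ((p : ℝ)⁻¹) * Real.sqrt ((Omn n ω).det) ^ ((p : ℝ)⁻¹)
          * (Real.sqrt n * (n : ℝ) ^ (-(1 : ℝ) / 2)) := by ring
    rw [this, hsq, mul_one]
  -- limits
  have hsqrtTop : Tendsto (fun n : ℕ => Real.sqrt n) atTop atTop := by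
    have h1 : Tendsto (fun x : ℝ => x ^ (1 / 2 : ℝ)) atTop atTop :=
      tendsto_rpow_atTop (by norm_num)
    have h2 : Tendsto (fun n : ℕ => ((n : ℝ)) ^ (1 / 2 : ℝ)) atTop atTop :=
      h1.comp tendsto_natCast_atTop_atTop
    refine h2.congr fun n => ?_
    rw [Real.sqrt_eq_rpow]
  have hvlim : Tendsto (fun n => Real.sqrt ((Omn n ω).det) ^ ((p : ℝ)⁻¹)) atTop
      (𝓝 (Real.sqrt Om.det ^ ((p : ℝ)⁻¹))) :=
    hdet.sqrt.rpow_const (Or.inr (by positivity))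
  have hWlim : Tendsto (fun n : ℕ => Real.sqrt n * g n) atTop (𝓝 A) := by
    have h2 : Tendsto (fun n : ℕ => d ^ ((p : ℝ)⁻¹) * Real.sqrt ((Omn n ω).det) ^ ((p : ℝ)⁻¹)
        + (Real.sqrt n)⁻¹) atTop (𝓝 (A + 0)) :=
      (tendsto_const_nhds.mul hvlim).add hsqrtTop.inv_tendsto_atTop
    rw [add_zero] at h2
    refine Tendsto.congr' ?_ h2
    filter_upwards [eventually_ge_atTop 1] with n hn using (hW n hn).symm
  have hq : Tendsto (fun n : ℕ => Real.sqrt n * g n / R n ω) atTop (𝓝 (A / Rlim)) :=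
    hWlim.div hRω hRlim.ne'
  -- a uniform bound on R
  obtain ⟨M, hM0, hMb⟩ : ∃ M : ℝ, 0 < M ∧ ∀ n, R n ω ≤ M := by
    obtain ⟨M₀, hM₀⟩ := hRω.bddAbove_range
    exact ⟨max M₀ 1, lt_of_lt_of_le zero_lt_one (le_max_right _ _),
      fun n => le_trans (hM₀ (Set.mem_range_self n)) (le_max_left _ _)⟩
  -- characterization of membership in the stopping set
  have hiff : ∀ ε : ℝ, ∀ n : ℕ,
      (0 < n ∧ (d * (n : ℝ) ^ (-(p : ℝ) / 2) * Real.sqrt (Omn n ω).det) ^ ((p : ℝ)⁻¹)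
        + s ε n ω ≤ ε * R n ω)
      ↔ (nstar ≤ n ∧ g n ≤ ε * R n ω) := by
    intro ε n
    rw [hs]
    constructor
    · rintro ⟨hn, hcond⟩
      by_cases hlt : n < nstar
      · exfalso
        rw [if_pos hlt, mul_one] at hcond
        have h1 : (0 : ℝ) < ((n : ℝ))⁻¹ := by
          have : (0 : ℝ) < n := by exact_mod_cast hn
          positivity
        have h2 := hbase_nonneg n
        linarith
      · push_neg at hlt
        rw [if_neg (not_lt.2 hlt), mul_zero, zero_add] at hcond
        exact ⟨hlt, hcond⟩
    · rintro ⟨hn, hcond⟩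
      refine ⟨lt_of_lt_of_le hnstar hn, ?_⟩
      rw [if_neg (not_lt.2 hn), mul_zero, zero_add]
      exact hcond
  -- nonemptiness of the stopping set for every ε > 0
  have hne : ∀ ε : ℝ, 0 < ε → {n : ℕ | 0 < n ∧
      (d * (n : ℝ) ^ (-(p : ℝ) / 2) * Real.sqrt (Omn n ω).det) ^ ((p : ℝ)⁻¹) + s ε n ω
        ≤ ε * R n ω}.Nonempty := by
    intro ε hε
    have hev1 : ∀ᶠ n : ℕ in atTop, Real.sqrt n * g n ≤ A + 1 :=
      hWlim.eventually (eventually_le_nhds (by linarith))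
    have hev2 : ∀ᶠ n : ℕ in atTop, Rlim / 2 ≤ R n ω :=
      hRω.eventually (eventually_ge_nhds (by linarith))
    have hev3 : ∀ᶠ n : ℕ in atTop, (A + 1) * 2 / (ε * Rlim) ≤ Real.sqrt n :=
      hsqrtTop.eventually_ge_atTop _
    obtain ⟨N, hN⟩ := ((hev1.and hev2).and hev3).exists_forall_of_atTop
    refine ⟨max N (max nstar 1), ?_⟩
    set n := max N (max nstar 1) with hn_def
    have hnN : N ≤ n := le_max_left _ _
    have hn1 : 1 ≤ n := le_trans (le_max_right _ _) (le_max_right _ _)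
    have hnstar' : nstar ≤ n := le_trans (le_max_left _ _) (le_max_right _ _)
    obtain ⟨⟨h1, h2⟩, h3⟩ := hN n hnN
    have hn0 : (0 : ℝ) < n := by exact_mod_cast hn1
    have hsqpos : 0 < Real.sqrt n := Real.sqrt_pos.2 hn0
    rw [Set.mem_setOf_eq, hiff]
    refine ⟨hnstar', ?_⟩
    have hgle : g n ≤ (A + 1) / Real.sqrt n := by
      rw [le_div_iff₀ hsqpos]; linarith [h1]
    have h4 : (A + 1) / Real.sqrt n ≤ ε * Rlim / 2 := by
      rw [div_le_iff₀ hsqpos]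
      have h5 : (A + 1) * 2 / (ε * Rlim) * (ε * Rlim / 2) = A + 1 := by
        field_simp
      nlinarith [mul_le_mul_of_nonneg_right h3 (by positivity : (0:ℝ) ≤ ε * Rlim / 2)]
    have h6 : ε * Rlim / 2 ≤ ε * R n ω := by nlinarith
    exact le_trans hgle (le_trans h4 h6)
  -- membership facts about T
  have hTmem : ∀ ε : ℝ, 0 < ε →
      nstar ≤ T ε ω ∧ g (T ε ω) ≤ ε * R (T ε ω) ω := by
    intro ε hε
    have hmem := Nat.sInf_mem (hne ε hε)
    rw [← hT ε ω] at hmem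
    exact (hiff ε (T ε ω)).1 hmem
  have hTnot : ∀ ε : ℝ, ∀ m : ℕ, m < T ε ω → nstar ≤ m → ε * R m ω < g m := by
    intro ε m hm hmstar
    rw [hT] at hm
    have := Nat.notMem_of_lt_sInf hm
    rw [Set.mem_setOf_eq, hiff] at this
    rcases not_and_or.1 this with h | h
    · exact absurd hmstar h
    · exact lt_of_not_ge h
  -- T ε ω → ∞ as ε → 0⁺
  have hTbig : ∀ K : ℕ, ∀ᶠ ε in 𝓝[>] (0 : ℝ), K ≤ T ε ω := by
    intro K
    have hev : ∀ᶠ ε in 𝓝[>] (0 : ℝ), ε < (M * (K + 1))⁻¹ :=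
      nhdsWithin_le_nhds (gt_mem_nhds (by positivity))
    filter_upwards [hev, self_mem_nhdsWithin] with ε hε1 hε2
    have hε0 : (0 : ℝ) < ε := hε2
    obtain ⟨ht1, ht2⟩ := hTmem ε hε0
    set t := T ε ω with ht_def
    have ht1' : 1 ≤ t := le_trans hnstar ht1
    have ht0 : (0 : ℝ) < t := by exact_mod_cast ht1'
    have h1 : ((t : ℝ))⁻¹ ≤ ε * R t ω := by
      have := hbase_nonneg t
      simp only [hg_def] at ht2
      linarith
    have h2 : ε * R t ω ≤ ε * M := mul_le_mul_of_nonneg_left (hMb t) hε0.le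
    have h3 : ε * M < ((K : ℝ) + 1)⁻¹ := by
      have hstep := mul_lt_mul_of_pos_right hε1 hM0
      have heq : (M * ((K : ℝ) + 1))⁻¹ * M = ((K : ℝ) + 1)⁻¹ := by
        rw [mul_inv, mul_comm, ← mul_assoc, mul_inv_cancel₀ hM0.ne', one_mul]
      linarith
    have h4 : ((t : ℝ))⁻¹ < ((K : ℝ) + 1)⁻¹ := by linarith
    have h5 : (K : ℝ) + 1 < t := by
      have hK0 : (0 : ℝ) < (K : ℝ) + 1 := by positivity
      exact (inv_lt_inv₀ (by positivity) hK0).1 h4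
    have : (K : ℝ) < t := by linarith
    exact_mod_cast this.le
  -- identify the limit constant
  have hAc : d ^ ((p : ℝ)⁻¹) * Om.det ^ (1 / (2 * (p : ℝ))) / Rlim = A / Rlim := by
    rw [hA_def]
    congr 2
    rw [Real.sqrt_eq_rpow, ← Real.rpow_mul hdetOm.le]
    congr 1
    rw [one_div, mul_inv]
    ring
  rw [hAc]
  rw [tendsto_order]
  constructor
  · -- lower bound
    intro a ha
    have hev1 : ∀ᶠ n : ℕ in atTop, a < Real.sqrt n * g n / R n ω :=
      hq.eventually_const_lt ha
    have hev2 : ∀ᶠ n : ℕ in atTop, 0 < R n ω := hRω.eventually_const_lt hRlim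
    obtain ⟨N, hN⟩ := (hev1.and hev2).exists_forall_of_atTop
    filter_upwards [hTbig N, self_mem_nhdsWithin] with ε hTN hε
    have hε0 : (0 : ℝ) < ε := hε
    set t := T ε ω with ht_def
    obtain ⟨h1, h2⟩ := hN t hTN
    obtain ⟨_, hg⟩ := hTmem ε hε0
    have h3 : Real.sqrt t * g t ≤ ε * Real.sqrt t * R t ω := by
      calc Real.sqrt t * g t ≤ Real.sqrt t * (ε * R t ω) :=
            mul_le_mul_of_nonneg_left hg (Real.sqrt_nonneg _)
        _ = ε * Real.sqrt t * R t ω := by ring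
    have h4 : Real.sqrt t * g t / R t ω ≤ ε * Real.sqrt t := by
      rw [div_le_iff₀ h2]; linarith
    linarith
  · -- upper bound
    intro u hu
    set u' := (A / Rlim + u) / 2 with hu'_def
    have hu'1 : A / Rlim < u' := by rw [hu'_def]; linarith
    have hu'2 : u' < u := by rw [hu'_def]; linarith
    have hev1 : ∀ᶠ n : ℕ in atTop, Real.sqrt n * g n / R n ω < u' :=
      hq.eventually_lt_const hu'1
    have hev2 : ∀ᶠ n : ℕ in atTop, 0 < R n ω := hRω.eventually_const_lt hRlim
    obtain ⟨N, hN⟩ := (hev1.and hev2).exists_forall_of_atTop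
    set N' := max N (max nstar 1) with hN'_def
    have hevε : ∀ᶠ ε in 𝓝[>] (0 : ℝ), ε < u - u' :=
      nhdsWithin_le_nhds (gt_mem_nhds (by linarith))
    filter_upwards [hTbig (N' + 1), self_mem_nhdsWithin, hevε] with ε h1 hε h2
    have hε0 : (0 : ℝ) < ε := hε
    set t := T ε ω with ht_def
    set m := t - 1 with hm_def
    have ht1 : 1 ≤ t := le_trans (Nat.le_add_left 1 N') h1
    have hm1 : m + 1 = t := Nat.succ_pred_eq_of_pos (lt_of_lt_of_le Nat.zero_lt_one ht1)
    have hmN' : N' ≤ m := by omega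
    have hmN : N ≤ m := le_trans (le_max_left _ _) hmN'
    have hmstar : nstar ≤ m := le_trans (le_trans (le_max_left _ _) (le_max_right _ _)) hmN'
    have hm1' : 1 ≤ m := le_trans (le_trans (le_max_right _ _) (le_max_right _ _)) hmN'
    have hmlt : m < t := by omega
    have hεRm : ε * R m ω < g m := hTnot ε m hmlt hmstar
    obtain ⟨hqm, hRm⟩ := hN m hmN
    have hm0 : (0 : ℝ) < m := by exact_mod_cast hm1'
    have hsqm : 0 < Real.sqrt m := Real.sqrt_pos.2 hm0
    have h5 : ε * Real.sqrt m * R m ω < Real.sqrt m * g m := by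
      have := mul_lt_mul_of_pos_left hεRm hsqm
      calc ε * Real.sqrt m * R m ω = Real.sqrt m * (ε * R m ω) := by ring
        _ < Real.sqrt m * g m := this
    have h6 : ε * Real.sqrt m < Real.sqrt m * g m / R m ω := by
      rw [lt_div_iff₀ hRm]; linarith
    have h7 : ε * Real.sqrt m < u' := lt_trans h6 hqm
    have h8 : Real.sqrt t ≤ Real.sqrt m + 1 := by
      have hcast : ((t : ℝ)) = (m : ℝ) + 1 := by exact_mod_cast hm1.symm
      rw [hcast]
      exact sqrt_add_one_le' _ (Nat.cast_nonneg m)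
    calc ε * Real.sqrt t ≤ ε * (Real.sqrt m + 1) :=
          mul_le_mul_of_nonneg_left h8 hε0.le
      _ = ε * Real.sqrt m + ε := by ring
      _ < u' + (u - u') := by linarith
      _ = u := by ring
end
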